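/- Let a, b, c ∈ ℂ with Re(c-1) < Re a < 1, and assume that 2-c is not a nonpositive integer. Then for every real x ∈ (0,1), F(a-c+1, b-c+1; 2-c; x) = (Γ(2-c)/(Γ(a-c+1)Γ(1-a))) · ∫_{1}^{∞} y^{b-1} (y-1)^{-a} (y-x)^{c-b-1} dy (an Euler type integral representation for the solution w₂(x;a,b,c) = x^{1-c} F(a-c+1,b-c+1;2-c;x) of the hypergeometric differential equation, the integral converging absolutely). -/

import Mathlib

open MeasureTheory Set Complex Filter

/-- Pochhammer symbol `(a)_k = a (a+1) ⋯ (a+k-1)`. -/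
noncomputable def poch (a : ℂ) (k : ℕ) : ℂ := ∏ i ∈ Finset.range k, (a + i)

/-- The Gauss hypergeometric function `F(a,b;c;x)` for real `x < 1`, defined by the
power series on `[0,1)` and by the (agreeing) Pfaff series for `x < 0`. -/
noncomputable def hypF (a b c : ℂ) (x : ℝ) : ℂ :=
  if 0 ≤ x then
    ∑' k : ℕ, poch a k * poch b k / (poch c k * (Nat.factorial k : ℂ)) * (x : ℂ) ^ k
  else
    ((1 - x : ℝ) : ℂ) ^ (-a) *
      ∑' k : ℕ, poch a k * poch (c - b) k / (poch c k * (Nat.factorial k : ℂ)) *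
        (((x / (x - 1) : ℝ)) : ℂ) ^ k

lemma poch_zero (s : ℂ) : poch s 0 = 1 := by simp [poch]

lemma poch_succ (s : ℂ) (k : ℕ) : poch s (k + 1) = poch s k * (s + k) :=
  Finset.prod_range_succ _ _

/-- ratio-test summability of `‖(s)_k/k!‖ r^k` -/
lemma summable_poch (s : ℂ) {r : ℝ} (h0 : 0 ≤ r) (h1 : r < 1) :
    Summable (fun k : ℕ => ‖poch s k‖ / (Nat.factorial k : ℝ) * r ^ k) := by
  set l : ℝ := (1 + r) / 2 with hl
  have hl1 : l < 1 := by rw [hl]; linarith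
  have hrl : r < l := by rw [hl]; linarith
  apply summable_of_ratio_norm_eventually_le hl1
  have hev : ∀ᶠ n : ℕ in atTop, ‖s‖ * r + n * r ≤ l * (n + 1) := by
    have : Tendsto (fun n : ℕ => (l - r) * n) atTop atTop :=
      Tendsto.const_mul_atTop (by linarith) tendsto_natCast_atTop_atTop
    filter_upwards [this.eventually_ge_atTop (‖s‖ * r)] with n hn
    have : (0:ℝ) ≤ l := by positivity
    nlinarith
  filter_upwards [hev] with n hn
  have hfac : (0:ℝ) < (Nat.factorial n : ℝ) := by positivity
  have e1 : (0:ℝ) ≤ ‖poch s (n+1)‖ / (Nat.factorial (n+1) : ℝ) * r ^ (n+1) := by positivity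
  have e2 : (0:ℝ) ≤ ‖poch s n‖ / (Nat.factorial n : ℝ) * r ^ n := by positivity
  rw [Real.norm_eq_abs, Real.norm_eq_abs, _root_.abs_of_nonneg e1, _root_.abs_of_nonneg e2]
  rw [poch_succ, Nat.factorial_succ, norm_mul]
  push_cast
  rw [pow_succ]
  have hs : ‖s + n‖ ≤ ‖s‖ + n := by
    simpa using (norm_add_le s (n : ℂ))
  have hr : ‖poch s n‖ * ‖s + n‖ / ((n + 1) * n.factorial) * (r ^ n * r)
      = (‖poch s n‖ / n.factorial * r ^ n) * ((‖s+n‖ * r) / (n+1)) := by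
    field_simp
  rw [hr]
  have h2 : (‖s+n‖ * r) / (n+1) ≤ l := by
    rw [div_le_iff₀ (by positivity)]
    calc ‖s+n‖ * r ≤ (‖s‖ + n) * r := by
          apply mul_le_mul_of_nonneg_right hs h0
      _ = ‖s‖ * r + n * r := by ring
      _ ≤ l * (n + 1) := hn
  calc (‖poch s n‖ / n.factorial * r ^ n) * ((‖s+n‖ * r) / (n+1))
      ≤ (‖poch s n‖ / n.factorial * r ^ n) * l := by
        apply mul_le_mul_of_nonneg_left h2 (by positivity)
    _ = l * (‖poch s n‖ / n.factorial * r ^ n) := by ring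

/-- ratio-test summability of the derivative series bound `‖(s)_k/k!‖ k r^(k-1)` -/
lemma summable_poch_deriv (s : ℂ) {r : ℝ} (h0 : 0 ≤ r) (h1 : r < 1) :
    Summable (fun k : ℕ => ‖poch s k‖ / (Nat.factorial k : ℝ) * (k * r ^ (k - 1))) := by
  set l : ℝ := (1 + r) / 2 with hl
  have hl1 : l < 1 := by rw [hl]; linarith
  have hrl : r < l := by rw [hl]; linarith
  apply summable_of_ratio_norm_eventually_le hl1
  have hev : ∀ᶠ n : ℕ in atTop, ‖s‖ * r + n * r ≤ l * n := by
    have : Tendsto (fun n : ℕ => (l - r) * n) atTop atTop :=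
      Tendsto.const_mul_atTop (by linarith) tendsto_natCast_atTop_atTop
    filter_upwards [this.eventually_ge_atTop (‖s‖ * r), eventually_ge_atTop 1] with n hn hn1
    nlinarith
  filter_upwards [hev, eventually_ge_atTop 1] with n hn hn1
  have e1 : (0:ℝ) ≤ ‖poch s (n+1)‖ / (Nat.factorial (n+1) : ℝ) * ((n+1 : ℕ) * r ^ (n+1-1)) := by positivity
  have e2 : (0:ℝ) ≤ ‖poch s n‖ / (Nat.factorial n : ℝ) * ((n:ℝ) * r ^ (n-1)) := by positivity
  rw [Real.norm_eq_abs, Real.norm_eq_abs, _root_.abs_of_nonneg e1, _root_.abs_of_nonneg e2]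
  rw [poch_succ, Nat.factorial_succ, norm_mul]
  obtain ⟨m, rfl⟩ : ∃ m, n = m + 1 := ⟨n - 1, (Nat.succ_pred_eq_of_pos hn1).symm⟩
  push_cast
  have hfac : (0:ℝ) < (Nat.factorial (m+1) : ℝ) := by positivity
  have key : ‖poch s (m+1)‖ * ‖s + ((m:ℂ)+1)‖ / (((m:ℝ)+1+1) * (m+1).factorial)
        * (((m:ℝ) + 1 + 1) * r ^ (m + 1))
      = (‖poch s (m+1)‖ / (m+1).factorial * (((m:ℝ)+1) * r ^ m))
        * ((‖s+((m:ℂ)+1)‖ * r) / ((m:ℝ)+1)) := by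
    field_simp
    ring
  rw [key]
  have hs : ‖s + ((m:ℂ)+1)‖ ≤ ‖s‖ + ((m:ℝ)+1) := by
    have h := norm_add_le s ((m:ℂ) + 1)
    have hcast : ‖(m:ℂ)+1‖ = (m:ℝ)+1 := by
      rw [show ((m:ℂ)+1) = ((m+1:ℕ):ℂ) by push_cast; ring, Complex.norm_natCast]; push_cast; ring
    rwa [hcast] at h
  have h2 : (‖s+((m:ℂ)+1)‖ * r) / ((m:ℝ)+1) ≤ l := by
    rw [div_le_iff₀ (by positivity)]
    calc ‖s+((m:ℂ)+1)‖ * r ≤ (‖s‖ + ((m:ℝ)+1)) * r :=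
          mul_le_mul_of_nonneg_right hs h0
      _ = ‖s‖ * r + ((m:ℝ)+1) * r := by ring
      _ ≤ l * ((m:ℝ)+1) := by push_cast at hn; exact hn
  calc _ ≤ (‖poch s (m+1)‖ / (m+1).factorial * (((m:ℝ)+1) * r ^ m)) * l := by
        apply mul_le_mul_of_nonneg_left h2 (by positivity)
    _ = l * (‖poch s (m+1)‖ / (m+1).factorial * (((m:ℝ)+1) * r ^ m)) := by ring

noncomputable def binF (s : ℂ) (y : ℝ) : ℂ :=
  ∑' k : ℕ, poch s k / (Nat.factorial k : ℂ) * (y : ℂ) ^ k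
noncomputable def binD (s : ℂ) (y : ℝ) : ℂ :=
  ∑' k : ℕ, poch s k / (Nat.factorial k : ℂ) * ((k : ℂ) * (y : ℂ) ^ (k - 1))

lemma norm_binterm (s : ℂ) (k : ℕ) (y : ℝ) :
    ‖poch s k / (Nat.factorial k : ℂ) * (y : ℂ) ^ k‖
      = ‖poch s k‖ / (Nat.factorial k : ℝ) * |y| ^ k := by
  rw [norm_mul, norm_div, norm_pow]
  simp [Complex.norm_natCast]

lemma norm_binterm' (s : ℂ) (k : ℕ) (y : ℝ) :
    ‖poch s k / (Nat.factorial k : ℂ) * ((k : ℂ) * (y : ℂ) ^ (k - 1))‖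
      = ‖poch s k‖ / (Nat.factorial k : ℝ) * ((k : ℝ) * |y| ^ (k - 1)) := by
  rw [norm_mul, norm_div, norm_mul, norm_pow]
  simp [Complex.norm_natCast]

lemma summable_binF (s : ℂ) {y : ℝ} (hy : |y| < 1) :
    Summable (fun k : ℕ => poch s k / (Nat.factorial k : ℂ) * (y : ℂ) ^ k) := by
  apply Summable.of_norm
  simpa only [norm_binterm] using summable_poch s (abs_nonneg y) hy

lemma summable_binD (s : ℂ) {y : ℝ} (hy : |y| < 1) :
    Summable (fun k : ℕ => poch s k / (Nat.factorial k : ℂ) * ((k : ℂ) * (y : ℂ) ^ (k - 1))) := by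
  apply Summable.of_norm
  simpa only [norm_binterm'] using summable_poch_deriv s (abs_nonneg y) hy

lemma binF_hasDerivAt (s : ℂ) {r : ℝ} (hr0 : 0 < r) (hr1 : r < 1) {y : ℝ}
    (hy : y ∈ Ioo (-r) r) : HasDerivAt (binF s) (binD s y) y := by
  have hbound : ∀ (k : ℕ) (z : ℝ), z ∈ Ioo (-r) r →
      ‖poch s k / (Nat.factorial k : ℂ) * ((k : ℂ) * (z : ℂ) ^ (k - 1))‖
        ≤ ‖poch s k‖ / (Nat.factorial k : ℝ) * ((k : ℝ) * r ^ (k - 1)) := by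
    intro k z hz
    rw [norm_binterm']
    have hz1 : |z| ≤ r := abs_le.mpr ⟨hz.1.le, hz.2.le⟩
    gcongr
  unfold binF binD
  exact hasDerivAt_tsum_of_isPreconnected (summable_poch_deriv s hr0.le hr1)
    isOpen_Ioo (convex_Ioo (-r) r).isPreconnected
    (fun k z _ => ((hasDerivAt_pow k ((z : ℝ) : ℂ)).comp_ofReal).const_mul _)
    hbound (show (0:ℝ) ∈ Ioo (-r) r from ⟨by linarith, hr0⟩)
    (summable_binF s (by rw [abs_zero]; linarith)) hy

lemma binD_identity (s : ℂ) {y : ℝ} (hy : |y| < 1) :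
    ((1 : ℂ) - (y : ℂ)) * binD s y = s * binF s y := by
  have hterm : ∀ k : ℕ,
      poch s (k+1) / (Nat.factorial (k+1) : ℂ) * (((k+1 : ℕ) : ℂ) * (y : ℂ) ^ (k + 1 - 1))
        = s * (poch s k / (Nat.factorial k : ℂ) * (y : ℂ) ^ k)
          + (k : ℂ) * (poch s k / (Nat.factorial k : ℂ) * (y : ℂ) ^ k) := by
    intro k
    rw [Nat.add_sub_cancel, poch_succ, Nat.factorial_succ]
    have h1 : ((k+1:ℕ) : ℂ) ≠ 0 := Nat.cast_ne_zero.mpr (Nat.succ_ne_zero k)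
    push_cast at h1
    have h2 : ((Nat.factorial k : ℕ) : ℂ) ≠ 0 := Nat.cast_ne_zero.mpr k.factorial_ne_zero
    push_cast
    field_simp
  have hS1 : Summable (fun k : ℕ => s * (poch s k / (Nat.factorial k : ℂ) * (y : ℂ) ^ k)) :=
    (summable_binF s hy).mul_left s
  have hS2 : Summable (fun k : ℕ => (k : ℂ) * (poch s k / (Nat.factorial k : ℂ) * (y : ℂ) ^ k)) := by
    apply Summable.of_norm
    have hbd : ∀ k : ℕ, ‖(k : ℂ) * (poch s k / (Nat.factorial k : ℂ) * (y : ℂ) ^ k)‖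
        ≤ ‖poch s k‖ / (Nat.factorial k : ℝ) * ((k:ℝ) * |y| ^ (k-1)) := by
      intro k
      rw [norm_mul, norm_binterm, Complex.norm_natCast]
      have hple : |y| ^ k ≤ |y| ^ (k - 1) :=
        pow_le_pow_of_le_one (abs_nonneg y) hy.le (Nat.sub_le k 1)
      calc (k:ℝ) * (‖poch s k‖ / (Nat.factorial k : ℝ) * |y| ^ k)
          ≤ (k:ℝ) * (‖poch s k‖ / (Nat.factorial k : ℝ) * |y| ^ (k-1)) := by
            apply mul_le_mul_of_nonneg_left _ (Nat.cast_nonneg k)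
            apply mul_le_mul_of_nonneg_left hple (by positivity)
        _ = ‖poch s k‖ / (Nat.factorial k : ℝ) * ((k:ℝ) * |y| ^ (k-1)) := by ring
    exact Summable.of_nonneg_of_le (fun k => norm_nonneg _) hbd
      (summable_poch_deriv s (abs_nonneg y) hy)
  have hshift : binD s y
      = ∑' k : ℕ, (s * (poch s k / (Nat.factorial k : ℂ) * (y : ℂ) ^ k)
          + (k : ℂ) * (poch s k / (Nat.factorial k : ℂ) * (y : ℂ) ^ k)) := by
    rw [binD, (summable_binD s hy).tsum_eq_zero_add]
    simp only [Nat.cast_zero, zero_mul, mul_zero, zero_add]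
    exact tsum_congr hterm
  have hyD : ∑' k : ℕ, (k : ℂ) * (poch s k / (Nat.factorial k : ℂ) * (y : ℂ) ^ k)
      = (y : ℂ) * binD s y := by
    rw [binD, ← tsum_mul_left]
    refine tsum_congr fun k => ?_
    cases k with
    | zero => simp
    | succ m =>
      rw [Nat.add_sub_cancel, pow_succ]
      push_cast
      ring
  have hD : binD s y = s * binF s y + (y : ℂ) * binD s y := by
    conv_lhs => rw [hshift]
    rw [hS1.tsum_add hS2, hyD, tsum_mul_left]
    rfl
  linear_combination hD

lemma binomial_series (s : ℂ) {u : ℝ} (h0 : 0 ≤ u) (h1 : u < 1) :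
    ∑' k : ℕ, poch s k / (Nat.factorial k : ℂ) * (u : ℂ) ^ k = ((1 - u : ℝ) : ℂ) ^ (-s) := by
  set r : ℝ := (1 + u) / 2 with hr
  have hur : u < r := by rw [hr]; linarith
  have hr1 : r < 1 := by rw [hr]; linarith
  have hr0 : 0 < r := by rw [hr]; linarith
  set H : ℝ → ℂ := fun y => binF s y * ((1 : ℂ) - (y : ℂ)) ^ s with hH
  have hsub : ∀ y : ℝ, y ∈ Icc (0:ℝ) u → y ∈ Ioo (-r) r := by
    intro y hyc
    exact ⟨by nlinarith [hyc.1], by nlinarith [hyc.2]⟩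
  have habs : ∀ y : ℝ, y ∈ Ioo (-r) r → |y| < 1 := by
    intro y hyc
    rw [abs_lt]; exact ⟨by nlinarith [hyc.1], by nlinarith [hyc.2]⟩
  have hHderiv : ∀ y ∈ Ioo (-r) r, HasDerivAt H 0 y := by
    intro y hyc
    have hslit : ((1 : ℂ) - (y : ℂ)) ∈ Complex.slitPlane := by
      rw [Complex.mem_slitPlane_iff]
      left
      simp only [Complex.sub_re, Complex.one_re, Complex.ofReal_re]
      have := hyc.2; linarith
    have hfC : HasDerivAt (fun z : ℂ => ((1 : ℂ) - z) ^ s)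
        (s * ((1 : ℂ) - (y : ℂ)) ^ (s - 1) * -1) (y : ℂ) := by
      have hsub : HasDerivAt (fun z : ℂ => (1 : ℂ) - z) (-1) (y : ℂ) :=
        (hasDerivAt_id ((y : ℝ) : ℂ)).const_sub (1 : ℂ)
      exact hsub.cpow_const (c := s) hslit
    have hG : HasDerivAt (fun y : ℝ => ((1 : ℂ) - (y : ℂ)) ^ s)
        (s * ((1 : ℂ) - (y : ℂ)) ^ (s - 1) * -1) y := hfC.comp_ofReal
    have hmul := (binF_hasDerivAt s hr0 hr1 hyc).mul hG
    have hne : ((1 : ℂ) - (y : ℂ)) ≠ 0 := Complex.slitPlane_ne_zero hslit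
    have hpow : ((1 : ℂ) - (y : ℂ)) ^ s = ((1 : ℂ) - (y : ℂ)) ^ (s - 1) * ((1 : ℂ) - (y : ℂ)) := by
      calc ((1 : ℂ) - (y : ℂ)) ^ s = ((1 : ℂ) - (y : ℂ)) ^ (s - 1 + 1) := by rw [sub_add_cancel]
        _ = ((1 : ℂ) - (y : ℂ)) ^ (s - 1) * ((1 : ℂ) - (y : ℂ)) ^ (1:ℂ) := Complex.cpow_add _ _ hne
        _ = ((1 : ℂ) - (y : ℂ)) ^ (s - 1) * ((1 : ℂ) - (y : ℂ)) := by rw [Complex.cpow_one]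
    have h0' : binD s y * ((1 : ℂ) - (y : ℂ)) ^ s
        + binF s y * (s * ((1 : ℂ) - (y : ℂ)) ^ (s - 1) * -1) = 0 := by
      rw [hpow]
      linear_combination ((1 : ℂ) - (y : ℂ)) ^ (s - 1) * binD_identity s (habs y hyc)
    rw [hH]
    rw [h0'] at hmul
    exact hmul
  have hconst := constant_of_has_deriv_right_zero
    (f := H) (a := 0) (b := u)
    (fun y hy => ((hHderiv y (hsub y hy)).continuousAt).continuousWithinAt)
    (fun y hy => ((hHderiv y (hsub y (Ico_subset_Icc_self hy))).hasDerivWithinAt))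
    u (right_mem_Icc.mpr h0)
  have hH0 : H 0 = 1 := by
    rw [hH]
    simp only [Complex.ofReal_zero, sub_zero, Complex.one_cpow, mul_one]
    rw [binF, tsum_eq_single 0 ?_]
    · simp [poch_zero]
    · intro k hk
      simp [zero_pow hk]
  have hHu : binF s u * ((1 : ℂ) - (u : ℂ)) ^ s = 1 := by
    have := hconst
    rw [hH0] at this
    exact this
  have hval : binF s u = ((1 : ℂ) - (u : ℂ)) ^ (-s) := by
    rw [Complex.cpow_neg]
    exact eq_inv_of_mul_eq_one_left hHu
  have hbase : ((1 - u : ℝ) : ℂ) = (1 : ℂ) - (u : ℂ) := by push_cast; ring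
  rw [hbase]
  exact hval

lemma contOn_cpow_ofReal {S : Set ℝ} (f : ℝ → ℝ) (hf : ContinuousOn f S)
    (hpos : ∀ t ∈ S, 0 < f t) (s : ℂ) :
    ContinuousOn (fun t => ((f t : ℝ) : ℂ) ^ s) S := by
  intro t ht
  refine ContinuousWithinAt.cpow ?_ continuousWithinAt_const ?_
  · exact (Complex.continuous_ofReal.comp_continuousOn hf) t ht
  · exact Complex.ofReal_mem_slitPlane.mpr (hpos t ht)

lemma Gamma_poch (z : ℂ) (hz : ∀ i : ℕ, z + i ≠ 0) (k : ℕ) :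
    Complex.Gamma (z + k) = poch z k * Complex.Gamma z := by
  induction k with
  | zero => simp [poch_zero]
  | succ n ih =>
    have h : z + ((n + 1 : ℕ) : ℂ) = (z + n) + 1 := by push_cast; ring
    rw [h, Complex.Gamma_add_one _ (hz n), ih, poch_succ]
    ring

lemma cpow_inv_ofReal {t : ℝ} (ht : 0 < t) (s : ℂ) : ((t⁻¹ : ℝ) : ℂ) ^ s = (t : ℂ) ^ (-s) := by
  rw [Complex.ofReal_inv, Complex.inv_cpow _ _
    (by rw [Complex.arg_ofReal_of_nonneg ht.le]; exact Real.pi_ne_zero.symm),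
    ← Complex.cpow_neg]

/-- Euler type integral representation for the solution
`w₂(x;a,b,c) = x^{1-c} F(a-c+1,b-c+1;2-c;x)` of the hypergeometric differential
equation; the integral converges absolutely. -/
theorem stmt_17 (a b c : ℂ) (ha1 : (c - 1).re < a.re) (ha2 : a.re < 1)
    (h1 : ∀ n : ℕ, 2 - c ≠ -(n : ℂ))
    (x : ℝ) (hx0 : 0 < x) (hx1 : x < 1) :
    IntegrableOn
      (fun y : ℝ => (y : ℂ) ^ (b - 1) * ((y - 1 : ℝ) : ℂ) ^ (-a) *
        ((y - x : ℝ) : ℂ) ^ (c - b - 1)) (Ioi (1:ℝ))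
    ∧
    hypF (a - c + 1) (b - c + 1) (2 - c) x
      = Complex.Gamma (2 - c) / (Complex.Gamma (a - c + 1) * Complex.Gamma (1 - a)) *
        ∫ y in Ioi (1:ℝ),
          (y : ℂ) ^ (b - 1) * ((y - 1 : ℝ) : ℂ) ^ (-a) * ((y - x : ℝ) : ℂ) ^ (c - b - 1) := by
  have hc1 : c.re - 1 < a.re := by
    simpa [Complex.sub_re, Complex.one_re] using ha1
  have hαre : 0 < (a - c + 1).re := by
    simp only [Complex.add_re, Complex.sub_re, Complex.one_re]; linarith
  have hδre : 0 < (1 - a).re := by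
    simp only [Complex.sub_re, Complex.one_re]; linarith
  have hαkre : ∀ k : ℕ, 0 < (a - c + 1 + (k : ℂ)).re := by
    intro k
    simp only [Complex.add_re, Complex.natCast_re, Complex.sub_re, Complex.one_re]
    have : (0:ℝ) ≤ k := Nat.cast_nonneg k
    linarith
  have hαne : ∀ i : ℕ, (a - c + 1) + (i : ℂ) ≠ 0 := by
    intro i h
    have := hαkre i
    rw [h] at this
    simp at this
  have hγne : ∀ i : ℕ, (2 - c) + (i : ℂ) ≠ 0 := by
    intro i h
    exact h1 i (by linear_combination h)
  have hΓγ : Complex.Gamma (2 - c) ≠ 0 := Complex.Gamma_ne_zero h1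
  have hΓα : Complex.Gamma (a - c + 1) ≠ 0 := Complex.Gamma_ne_zero_of_re_pos hαre
  have hΓδ : Complex.Gamma (1 - a) ≠ 0 := Complex.Gamma_ne_zero_of_re_pos hδre
  have hΓγk : ∀ k : ℕ, Complex.Gamma ((2 - c) + (k:ℂ)) ≠ 0 := fun k =>
    Complex.Gamma_ne_zero (fun m => by
      intro h
      exact hγne (k + m) (by push_cast; linear_combination h))
  have hpochγ : ∀ k : ℕ, poch (2 - c) k ≠ 0 := by
    intro k
    rw [poch]
    exact Finset.prod_ne_zero_iff.mpr (fun i _ => hγne i)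
  -- notation
  set g : ℝ → ℂ := fun y : ℝ => (y : ℂ) ^ (b - 1) * ((y - 1 : ℝ) : ℂ) ^ (-a) *
        ((y - x : ℝ) : ℂ) ^ (c - b - 1) with hgdef
  set E : ℝ → ℂ := fun t : ℝ => (t : ℂ) ^ (a - c) * ((1 - t : ℝ) : ℂ) ^ (-a) *
        ((1 - x * t : ℝ) : ℂ) ^ (c - b - 1) with hEdef
  -- change of variables
  have himg : (fun t : ℝ => t⁻¹) '' Ioo 0 1 = Ioi 1 := by
    ext y
    constructor
    · rintro ⟨t, ⟨ht0, ht1⟩, rfl⟩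
      exact (one_lt_inv₀ ht0).mpr ht1
    · intro hy
      have hy1 : (1:ℝ) < y := hy
      refine ⟨y⁻¹, ⟨by positivity, inv_lt_one_of_one_lt₀ hy1⟩, inv_inv y⟩
  have hderivw : ∀ t ∈ Ioo (0:ℝ) 1, HasDerivWithinAt (fun t : ℝ => t⁻¹) (-((t:ℝ)^2)⁻¹) (Ioo 0 1) t :=
    fun t ht => (hasDerivAt_inv (ne_of_gt ht.1)).hasDerivWithinAt
  have hinj : InjOn (fun t : ℝ => t⁻¹) (Ioo 0 1) := fun p _ q _ h => inv_injective h
  have hptw : ∀ t ∈ Ioo (0:ℝ) 1, |(-((t:ℝ)^2)⁻¹)| • g t⁻¹ = E t := by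
    intro t ht
    obtain ⟨ht0, ht1⟩ := ht
    have htne : (t : ℂ) ≠ 0 := Complex.ofReal_ne_zero.mpr (ne_of_gt ht0)
    have e1 : (t⁻¹ - 1 : ℝ) = (1 - t) * t⁻¹ := by field_simp
    have e2 : (t⁻¹ - x : ℝ) = (1 - x * t) * t⁻¹ := by field_simp
    have habs : |(-((t:ℝ)^2)⁻¹)| = (((t:ℝ)^2)⁻¹ : ℝ) := by
      rw [abs_neg, abs_inv, abs_of_pos (by positivity)]
    have f1 : ((t⁻¹ : ℝ) : ℂ) ^ (b - 1) = (t : ℂ) ^ (-(b - 1)) := cpow_inv_ofReal ht0 _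
    have f2 : ((t⁻¹ - 1 : ℝ) : ℂ) ^ (-a) = ((1 - t : ℝ) : ℂ) ^ (-a) * (t : ℂ) ^ a := by
      rw [e1, Complex.ofReal_mul,
        Complex.mul_cpow_ofReal_nonneg (by linarith) (by positivity),
        cpow_inv_ofReal ht0 (-a), neg_neg]
    have f3 : ((t⁻¹ - x : ℝ) : ℂ) ^ (c - b - 1)
        = ((1 - x * t : ℝ) : ℂ) ^ (c - b - 1) * (t : ℂ) ^ (-(c - b - 1)) := by
      rw [e2, Complex.ofReal_mul,
        Complex.mul_cpow_ofReal_nonneg (by nlinarith) (by positivity),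
        cpow_inv_ofReal ht0 (c - b - 1)]
    have hT2 : ((((t:ℝ)^2)⁻¹ : ℝ) : ℂ) = (t : ℂ) ^ (-(2:ℂ)) := by
      push_cast
      rw [show ((2:ℂ)) = ((2:ℕ):ℂ) by norm_num, Complex.cpow_neg, Complex.cpow_natCast]
    have h4 : (t : ℂ) ^ (-(2:ℂ)) * ((t : ℂ) ^ (-(b-1)) * (t : ℂ) ^ a * (t : ℂ) ^ (-(c-b-1)))
        = (t : ℂ) ^ (a - c) := by
      rw [← Complex.cpow_add _ _ htne, ← Complex.cpow_add _ _ htne, ← Complex.cpow_add _ _ htne]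
      congr 1
      ring
    show |(-((t:ℝ)^2)⁻¹)| • ((((t⁻¹:ℝ)) : ℂ) ^ (b - 1) * ((t⁻¹ - 1 : ℝ) : ℂ) ^ (-a) *
        ((t⁻¹ - x : ℝ) : ℂ) ^ (c - b - 1)) = E t
    rw [habs, Complex.real_smul, hT2, f1, f2, f3, hEdef]
    linear_combination ((1 - t : ℝ) : ℂ) ^ (-a) * ((1 - x * t : ℝ) : ℂ) ^ (c - b - 1) * h4
  -- beta-type integrands
  set Gk : ℕ → ℝ → ℂ := fun k t => (t : ℂ) ^ (a - c + 1 + (k:ℂ) - 1) * ((1:ℂ) - (t:ℂ)) ^ ((1 - a) - 1)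
    with hGkdef
  set Fk : ℕ → ℝ → ℂ := fun k t => (t : ℂ) ^ (a - c) * ((1 - t : ℝ) : ℂ) ^ (-a) *
      (poch (b - c + 1) k / (Nat.factorial k : ℂ) * ((x * t : ℝ) : ℂ) ^ k) with hFkdef
  have hGkInt : ∀ k : ℕ, IntegrableOn (Gk k) (Ioo 0 1) := by
    intro k
    have h := Complex.betaIntegral_convergent (hαkre k) hδre
    rw [intervalIntegrable_iff_integrableOn_Ioc_of_le zero_le_one] at h
    exact h.mono_set Ioo_subset_Ioc_self
  have hFkGk : ∀ k : ℕ, ∀ t ∈ Ioo (0:ℝ) 1,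
      Fk k t = (poch (b - c + 1) k / (Nat.factorial k : ℂ) * (x : ℂ) ^ k) * Gk k t := by
    intro k t ht
    obtain ⟨ht0, ht1⟩ := ht
    have htne : (t : ℂ) ≠ 0 := Complex.ofReal_ne_zero.mpr (ne_of_gt ht0)
    have hxt : ((x * t : ℝ) : ℂ) ^ k = (x : ℂ) ^ k * (t : ℂ) ^ k := by
      push_cast; rw [mul_pow]
    have hsplit : (t : ℂ) ^ (a - c) * (t : ℂ) ^ (k:ℕ) = (t : ℂ) ^ (a - c + 1 + (k:ℂ) - 1) := by
      rw [← Complex.cpow_natCast (t:ℂ) k, ← Complex.cpow_add _ _ htne]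
      congr 1
      ring
    have hone : ((1 - t : ℝ) : ℂ) = (1:ℂ) - (t:ℂ) := by push_cast; ring
    have hexp : ((1:ℂ) - (t:ℂ)) ^ ((1 - a) - 1) = ((1 - t : ℝ) : ℂ) ^ (-a) := by
      rw [hone]
      congr 1
      ring
    rw [hFkdef, hGkdef]
    simp only []
    rw [hxt, hexp, ← hsplit]
    ring
  have hFkInt : ∀ k : ℕ, IntegrableOn (Fk k) (Ioo 0 1) := by
    intro k
    apply IntegrableOn.congr_fun ((hGkInt k).const_mul
      (poch (b - c + 1) k / (Nat.factorial k : ℂ) * (x : ℂ) ^ k))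
      (fun t ht => (hFkGk k t ht).symm) measurableSet_Ioo
  have hGkint_eq : ∀ k : ℕ, ∫ t in Ioo (0:ℝ) 1, Gk k t
      = Complex.betaIntegral (a - c + 1 + (k:ℂ)) (1 - a) := by
    intro k
    rw [Complex.betaIntegral, intervalIntegral.integral_of_le zero_le_one,
      integral_Ioc_eq_integral_Ioo]
  have hFkint_eq : ∀ k : ℕ, ∫ t in Ioo (0:ℝ) 1, Fk k t
      = (poch (b - c + 1) k / (Nat.factorial k : ℂ) * (x : ℂ) ^ k) *
        Complex.betaIntegral (a - c + 1 + (k:ℂ)) (1 - a) := by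
    intro k
    rw [setIntegral_congr_fun measurableSet_Ioo (fun t ht => hFkGk k t ht),
      integral_const_mul, hGkint_eq]
  -- norm bound and summability
  have hbaseInt : IntegrableOn (fun t : ℝ => (t:ℂ)^(a-c) * ((1 - t:ℝ):ℂ)^(-a)) (Ioo 0 1) := by
    apply IntegrableOn.congr_fun (hGkInt 0) _ measurableSet_Ioo
    intro t ht
    rw [hGkdef]
    simp only []
    have h01 : a - c + 1 + ((0:ℕ):ℂ) - 1 = a - c := by push_cast; ring
    have hone : ((1 - t : ℝ) : ℂ) = (1:ℂ) - (t:ℂ) := by push_cast; ring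
    rw [h01, hone]
    congr 1
    congr 1
    ring
  set M : ℝ := ∫ t in Ioo (0:ℝ) 1, ‖(t:ℂ)^(a-c) * ((1 - t:ℝ):ℂ)^(-a)‖ with hMdef
  have hnorm_le : ∀ k : ℕ, (∫ t in Ioo (0:ℝ) 1, ‖Fk k t‖)
      ≤ ‖poch (b-c+1) k‖ / (Nat.factorial k : ℝ) * x^k * M := by
    intro k
    have hle : ∀ t ∈ Ioo (0:ℝ) 1, ‖Fk k t‖
        ≤ ‖poch (b-c+1) k‖ / (Nat.factorial k : ℝ) * x^k *
          ‖(t:ℂ)^(a-c) * ((1 - t:ℝ):ℂ)^(-a)‖ := by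
      intro t ht
      obtain ⟨ht0, ht1⟩ := ht
      rw [hFkdef]
      simp only []
      rw [norm_mul, norm_binterm]
      have hxt : |x * t| ^ k ≤ x ^ k := by
        rw [_root_.abs_of_nonneg (by positivity : (0:ℝ) ≤ x * t)]
        apply pow_le_pow_left₀ (by positivity)
        nlinarith
      calc ‖(t:ℂ)^(a-c) * ((1 - t:ℝ):ℂ)^(-a)‖ *
            (‖poch (b-c+1) k‖ / (Nat.factorial k : ℝ) * |x*t| ^ k)
          ≤ ‖(t:ℂ)^(a-c) * ((1 - t:ℝ):ℂ)^(-a)‖ *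
            (‖poch (b-c+1) k‖ / (Nat.factorial k : ℝ) * x ^ k) := by
            apply mul_le_mul_of_nonneg_left _ (norm_nonneg _)
            apply mul_le_mul_of_nonneg_left hxt (by positivity)
        _ = ‖poch (b-c+1) k‖ / (Nat.factorial k : ℝ) * x^k *
            ‖(t:ℂ)^(a-c) * ((1 - t:ℝ):ℂ)^(-a)‖ := by ring
    calc (∫ t in Ioo (0:ℝ) 1, ‖Fk k t‖)
        ≤ ∫ t in Ioo (0:ℝ) 1, ‖poch (b-c+1) k‖ / (Nat.factorial k : ℝ) * x^k *
            ‖(t:ℂ)^(a-c) * ((1 - t:ℝ):ℂ)^(-a)‖ :=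
          setIntegral_mono_on ((hFkInt k).norm)
            ((hbaseInt.norm).const_mul _) measurableSet_Ioo hle
      _ = ‖poch (b-c+1) k‖ / (Nat.factorial k : ℝ) * x^k * M := by
          rw [hMdef, integral_const_mul]
  have hsummable : Summable (fun k : ℕ => ∫ t in Ioo (0:ℝ) 1, ‖Fk k t‖) := by
    apply Summable.of_nonneg_of_le
      (fun k => integral_nonneg (fun t => norm_nonneg _)) hnorm_le
    exact (summable_poch (b-c+1) hx0.le hx1).mul_right M
  have hswap : ∑' k : ℕ, ∫ t in Ioo (0:ℝ) 1, Fk k t = ∫ t in Ioo (0:ℝ) 1, ∑' k : ℕ, Fk k t :=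
    MeasureTheory.integral_tsum_of_summable_integral_norm hFkInt hsummable
  have hEsum : ∀ t ∈ Ioo (0:ℝ) 1, ∑' k : ℕ, Fk k t = E t := by
    intro t ht
    obtain ⟨ht0, ht1⟩ := ht
    have hb := binomial_series (b - c + 1) (u := x * t) (by positivity) (by nlinarith)
    rw [hFkdef]
    simp only []
    rw [tsum_mul_left, hb, hEdef]
    have hexp : -(b - c + 1) = c - b - 1 := by ring
    rw [hexp]
  -- integrability of E
  have hcontE : ContinuousOn E (Ioo (0:ℝ) 1) := by
    rw [hEdef]
    apply ContinuousOn.mul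
    apply ContinuousOn.mul
    · exact contOn_cpow_ofReal (fun t => t) continuousOn_id (fun t ht => ht.1) _
    · refine contOn_cpow_ofReal (fun t => 1 - t)
        (continuousOn_const.sub continuousOn_id) (fun t ht => ?_) _
      have h2 := ht.2
      show (0:ℝ) < 1 - t
      linarith
    · refine contOn_cpow_ofReal (fun t => 1 - x * t)
        ((continuousOn_const).sub (continuousOn_const.mul continuousOn_id))
        (fun t ht => ?_) _
      have h2 := ht.2
      have h3 := ht.1
      show (0:ℝ) < 1 - x * t
      nlinarith
  have hEInt : IntegrableOn E (Ioo (0:ℝ) 1) := by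
    set ρ : ℝ := (c - b - 1).re with hρ
    have hCC : ∀ t ∈ Ioo (0:ℝ) 1, ‖((1 - x * t : ℝ):ℂ)^(c-b-1)‖ ≤ (1-x)^ρ + 1 := by
      intro t ht
      obtain ⟨ht0, ht1⟩ := ht
      have hpos : (0:ℝ) < 1 - x * t := by nlinarith
      have hx1' : (0:ℝ) < 1 - x := by linarith
      rw [Complex.norm_cpow_eq_rpow_re_of_pos hpos]
      rcases le_or_gt ρ 0 with h | h
      · have h2 := Real.rpow_le_rpow_of_nonpos hx1' (by nlinarith : 1 - x ≤ 1 - x * t) h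
        linarith
      · have h2 : (1 - x*t) ^ ρ ≤ 1 := Real.rpow_le_one hpos.le (by nlinarith) h.le
        have h3 : (0:ℝ) ≤ (1-x)^ρ := Real.rpow_nonneg hx1'.le ρ
        linarith
    apply Integrable.mono' ((hbaseInt.norm).const_mul ((1-x)^ρ + 1))
      (hcontE.aestronglyMeasurable measurableSet_Ioo)
    filter_upwards [ae_restrict_mem measurableSet_Ioo] with t ht
    rw [hEdef]
    simp only []
    rw [norm_mul]
    calc ‖(t:ℂ)^(a-c) * ((1 - t:ℝ):ℂ)^(-a)‖ * ‖((1 - x * t:ℝ):ℂ)^(c-b-1)‖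
        ≤ ‖(t:ℂ)^(a-c) * ((1 - t:ℝ):ℂ)^(-a)‖ * ((1-x)^ρ + 1) := by
          apply mul_le_mul_of_nonneg_left (hCC t ht) (norm_nonneg _)
      _ = ((1-x)^ρ + 1) * ‖(t:ℂ)^(a-c) * ((1 - t:ℝ):ℂ)^(-a)‖ := by ring
  -- conjunct 1
  have hint1 : IntegrableOn g (Ioi (1:ℝ)) := by
    rw [← himg]
    rw [integrableOn_image_iff_integrableOn_abs_deriv_smul measurableSet_Ioo hderivw hinj]
    exact IntegrableOn.congr_fun hEInt (fun t ht => (hptw t ht).symm) measurableSet_Ioo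
  -- integral computation
  have hbeta : ∀ k : ℕ, Complex.betaIntegral (a - c + 1 + (k:ℂ)) (1 - a)
      = poch (a-c+1) k * Complex.Gamma (a-c+1) * Complex.Gamma (1-a)
        / (poch (2-c) k * Complex.Gamma (2-c)) := by
    intro k
    have h := Complex.Gamma_mul_Gamma_eq_betaIntegral (hαkre k) hδre
    have hsum : (a - c + 1 + (k:ℂ)) + (1 - a) = (2 - c) + (k:ℂ) := by ring
    rw [hsum, Gamma_poch (a-c+1) hαne k, Gamma_poch (2-c) hγne k] at h
    rw [eq_div_iff (mul_ne_zero (hpochγ k) hΓγ)]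
    linear_combination -h
  have hterm2 : ∀ k : ℕ, (poch (b-c+1) k / (Nat.factorial k : ℂ) * (x:ℂ)^k) *
        Complex.betaIntegral (a - c + 1 + (k:ℂ)) (1 - a)
      = (Complex.Gamma (a-c+1) * Complex.Gamma (1-a) / Complex.Gamma (2-c)) *
        (poch (a-c+1) k * poch (b-c+1) k / (poch (2-c) k * (Nat.factorial k : ℂ)) * (x:ℂ)^k) := by
    intro k
    rw [hbeta k]
    have hk : ((Nat.factorial k : ℕ):ℂ) ≠ 0 := Nat.cast_ne_zero.mpr k.factorial_ne_zero
    field_simp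
  have hIfull : (∫ y in Ioi (1:ℝ), g y)
      = (Complex.Gamma (a-c+1) * Complex.Gamma (1-a) / Complex.Gamma (2-c)) *
        ∑' k : ℕ, poch (a-c+1) k * poch (b-c+1) k / (poch (2-c) k * (Nat.factorial k : ℂ)) * (x:ℂ)^k := by
    calc (∫ y in Ioi (1:ℝ), g y) = ∫ t in Ioo (0:ℝ) 1, E t := by
          rw [← himg, integral_image_eq_integral_abs_deriv_smul measurableSet_Ioo hderivw hinj]
          exact setIntegral_congr_fun measurableSet_Ioo hptw
      _ = ∫ t in Ioo (0:ℝ) 1, ∑' k : ℕ, Fk k t :=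
          setIntegral_congr_fun measurableSet_Ioo (fun t ht => (hEsum t ht).symm)
      _ = ∑' k : ℕ, ∫ t in Ioo (0:ℝ) 1, Fk k t := hswap.symm
      _ = ∑' k : ℕ, (poch (b-c+1) k / (Nat.factorial k : ℂ) * (x:ℂ)^k) *
            Complex.betaIntegral (a - c + 1 + (k:ℂ)) (1 - a) := tsum_congr hFkint_eq
      _ = ∑' k : ℕ, (Complex.Gamma (a-c+1) * Complex.Gamma (1-a) / Complex.Gamma (2-c)) *
            (poch (a-c+1) k * poch (b-c+1) k / (poch (2-c) k * (Nat.factorial k : ℂ)) * (x:ℂ)^k) :=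
          tsum_congr hterm2
      _ = _ := tsum_mul_left
  refine ⟨hint1, ?_⟩
  rw [hypF, if_pos hx0.le]
  rw [show (∫ y in Ioi (1:ℝ),
          (y : ℂ) ^ (b - 1) * ((y - 1 : ℝ) : ℂ) ^ (-a) * ((y - x : ℝ) : ℂ) ^ (c - b - 1))
        = ∫ y in Ioi (1:ℝ), g y from rfl, hIfull]
  rw [← mul_assoc]
  rw [show Complex.Gamma (2 - c) / (Complex.Gamma (a - c + 1) * Complex.Gamma (1 - a)) *
      (Complex.Gamma (a-c+1) * Complex.Gamma (1-a) / Complex.Gamma (2-c)) = 1 from by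
    field_simp]
  rw [one_mul]
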